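/- Let n ≥ 1 and 1 ≤ m ≤ n, and let A ∈ ℝ^{n×n}. The average over all pairs (I, J) of m-element subsets of {1,...,n} of the matrix S(I,J) = Σ_{i∈I} e_i·(row_i A) − Σ_{i∈I, j∈J} E_{ij} equals (m/n)·A − (m²/n²)·E, where row_i A denotes the i-th row of A, E_{ij} is the matrix with a 1 in entry (i,j) and 0 elsewhere, and E is the all-ones matrix. -/

import Mathlib

open Finset Matrix

lemma count_mem_aux (n m : ℕ) (hm : 1 ≤ m) (a : Fin n) :
    ((univ : Finset (Fin n)).powersetCard m |>.filter (fun I => a ∈ I)).card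
      = (n - 1).choose (m - 1) := by
  have hcard : ((univ : Finset (Fin n)).erase a).card = n - 1 := by
    simp [Finset.card_erase_of_mem]
  rw [← hcard, ← Finset.card_powersetCard]
  apply Finset.card_bij (fun I _ => I.erase a)
  · intro I hI
    simp only [mem_filter, mem_powersetCard_univ] at hI
    rw [mem_powersetCard]
    exact ⟨Finset.erase_subset_erase a (Finset.subset_univ I),
      by rw [Finset.card_erase_of_mem hI.2, hI.1]⟩
  · intro I hI I' hI' h
    simp only [mem_filter] at hI hI'
    rw [← Finset.insert_erase hI.2, ← Finset.insert_erase hI'.2, h]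
  · intro J hJ
    rw [mem_powersetCard] at hJ
    have haJ : a ∉ J := fun h => (Finset.mem_erase.1 (hJ.1 h)).1 rfl
    refine ⟨insert a J, ?_, Finset.erase_insert haJ⟩
    simp only [mem_filter, mem_powersetCard_univ, Finset.mem_insert, true_or, and_true]
    rw [Finset.card_insert_of_notMem haJ, hJ.2]
    omega

lemma entry_aux (n : ℕ) (A : Matrix (Fin n) (Fin n) ℝ) (I : Finset (Fin n)) (a b : Fin n) :
    (∑ i ∈ I, Matrix.single i i (1 : ℝ) * A) a b
      = if a ∈ I then A a b else 0 := by
  rw [Matrix.sum_apply]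
  have : ∀ i ∈ I, (Matrix.single i i (1 : ℝ) * A) a b
      = if i = a then A a b else 0 := by
    intro i _
    rw [Matrix.mul_apply]
    simp only [Matrix.single, Matrix.of_apply, ite_and]
    by_cases h : i = a <;> simp [h, Finset.sum_ite_eq]
  rw [Finset.sum_congr rfl this, Finset.sum_ite_eq' I a (fun _ => A a b)]

lemma entry_aux2 (n : ℕ) (I J : Finset (Fin n)) (a b : Fin n) :
    (∑ i ∈ I, ∑ j ∈ J, Matrix.single i j (1 : ℝ)) a b
      = if a ∈ I ∧ b ∈ J then 1 else 0 := by
  simp only [Matrix.sum_apply, Matrix.single, Matrix.of_apply, ite_and]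
  by_cases ha : a ∈ I <;> by_cases hb : b ∈ J <;>
    simp [ha, hb, Finset.sum_ite_eq', eq_comm]

lemma choose_fact (n m : ℕ) (hn : 1 ≤ n) (hm : 1 ≤ m) :
    n * (n - 1).choose (m - 1) = n.choose m * m := by
  have h := Nat.add_one_mul_choose_eq (n - 1) (m - 1)
  have h1 : n - 1 + 1 = n := by omega
  have h2 : m - 1 + 1 = m := by omega
  simpa [Nat.succ_eq_add_one, h1, h2] using h

lemma sum_ind (n m : ℕ) (hm : 1 ≤ m) (a : Fin n) (x : ℝ) :
    ∑ I ∈ (univ : Finset (Fin n)).powersetCard m, (if a ∈ I then x else 0)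
      = ((n - 1).choose (m - 1) : ℝ) * x := by
  rw [← Finset.sum_filter, Finset.sum_const, count_mem_aux n m hm a, nsmul_eq_mul]

theorem stmt_3 (n m : ℕ) (hn : 1 ≤ n) (h1 : 1 ≤ m) (h2 : m ≤ n)
    (A : Matrix (Fin n) (Fin n) ℝ) :
    (1 / ((Nat.choose n m : ℝ))^2) •
      (∑ I ∈ (univ : Finset (Fin n)).powersetCard m,
       ∑ J ∈ (univ : Finset (Fin n)).powersetCard m,
        ((∑ i ∈ I, Matrix.single i i (1 : ℝ) * A)
          - ∑ i ∈ I, ∑ j ∈ J, Matrix.single i j (1 : ℝ)))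
      = ((m : ℝ) / (n : ℝ)) • A
        - ((m : ℝ)^2 / (n : ℝ)^2) • (Matrix.of fun _ _ => (1 : ℝ)) := by
  have hC : (n.choose m : ℝ) ≠ 0 := by
    exact_mod_cast (Nat.choose_pos h2).ne'
  have hn0 : (n : ℝ) ≠ 0 := by positivity
  set K : ℝ := ((n - 1).choose (m - 1) : ℝ) with hK
  clear_value K
  have hKC : (n : ℝ) * K = (n.choose m : ℝ) * m := by
    rw [hK]
    exact_mod_cast choose_fact n m hn h1
  ext a b
  simp only [Matrix.smul_apply, Matrix.sub_apply, smul_eq_mul, Matrix.of_apply]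
  rw [Matrix.sum_apply]
  have inner : ∀ I ∈ (univ : Finset (Fin n)).powersetCard m,
      (∑ J ∈ (univ : Finset (Fin n)).powersetCard m,
        ((∑ i ∈ I, Matrix.single i i (1 : ℝ) * A)
          - ∑ i ∈ I, ∑ j ∈ J, Matrix.single i j (1 : ℝ))) a b
      = (if a ∈ I then (n.choose m : ℝ) * A a b - K else 0) := by
    intro I _
    rw [Matrix.sum_apply]
    have step : ∀ J ∈ (univ : Finset (Fin n)).powersetCard m,
        ((∑ i ∈ I, Matrix.single i i (1 : ℝ) * A)
          - ∑ i ∈ I, ∑ j ∈ J, Matrix.single i j (1 : ℝ)) a b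
        = (if a ∈ I then A a b - (if b ∈ J then 1 else 0) else 0) := by
      intro J _
      rw [Matrix.sub_apply, entry_aux, entry_aux2]
      by_cases ha : a ∈ I <;> simp [ha]
    rw [Finset.sum_congr rfl step]
    by_cases ha : a ∈ I
    · simp only [ha, if_true]
      rw [Finset.sum_sub_distrib, Finset.sum_const, Finset.card_powersetCard,
        Finset.card_univ, Fintype.card_fin, nsmul_eq_mul, sum_ind n m h1 b 1, mul_one, ← hK]
    · simp [ha]
  rw [Finset.sum_congr rfl inner, sum_ind n m h1 a ((n.choose m : ℝ) * A a b - K), ← hK]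
  have hKeq : K = (m / n) * (n.choose m : ℝ) := by
    field_simp
    linarith [hKC]
  rw [hKeq]
  field_simp
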